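/- arXiv:1007.5488 — 3 statements merged into one kernel-verified Lean document; each statement's English description precedes it below -/
import Mathlib

section
/- In the stable-failures process model, the derived CSP(□,Ω) equations hold: for all processes P, Q over A, (i) P ⊓ (Ω □ Q) = P ⊓ (P □ Q), and (ii) (Ω □ P) ⊓ (Ω □ Q) = (Ω □ P) □ (Ω □ Q). -/
namespace CSP

variable {A : Type*}

/-- A process candidate over `A`: a pair of a trace set and a set of failure
pairs `(w, W)` where the refusal set `W ⊆ A` may be infinite. -/
abbrev Proc (A : Type*) := Set (List A) × Set (List A × Set A)

/-- Conditions (1)–(5) making a pair `(T, F)` a process of the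
stable failures model. -/
structure IsProc (P : Proc A) : Prop where
  nil_mem : [] ∈ P.1
  prefix_closed : ∀ w a, w ++ [a] ∈ P.1 → w ∈ P.1
  fail_trace : ∀ w (W : Set A), (w, W) ∈ P.2 → w ∈ P.1
  subset_closed : ∀ w (W V : Set A), (w, W) ∈ P.2 → V ⊆ W → (w, V) ∈ P.2
  ext_closed : ∀ w (W V : Set A), (w, W) ∈ P.2 →
    (∀ a ∈ V, w ++ [a] ∉ P.1) → (w, W ∪ V) ∈ P.2

/-- A process is finitary when its trace set is finite. -/
def ProcFinitary (P : Proc A) : Prop := P.1.Finite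

/-- The future set of a trace of a process. -/
def futP (P : Proc A) (w : List A) : Set A := {a | w ++ [a] ∈ P.1}

/-- Divergence `Ω`. -/
def pomega (A : Type*) : Proc A := ({[]}, ∅)

/-- Deadlock `Stop`. -/
def pstop (A : Type*) : Proc A := ({[]}, {p | p.1 = []})

/-- Action prefix `a → P`. -/
def pact (a : A) (P : Proc A) : Proc A :=
  ({[]} ∪ {w | ∃ t ∈ P.1, w = a :: t},
   {p | p.1 = [] ∧ a ∉ p.2} ∪ {p | ∃ w, p.1 = a :: w ∧ (w, p.2) ∈ P.2})

/-- Internal choice `P ⊓ Q`. -/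
def pintc (P Q : Proc A) : Proc A := (P.1 ∪ Q.1, P.2 ∪ Q.2)

/-- External choice `P □ Q`. -/
def pextc (P Q : Proc A) : Proc A :=
  (P.1 ∪ Q.1,
   {p | p.1 = [] ∧ p ∈ P.2 ∩ Q.2} ∪ {p | p.1 ≠ [] ∧ p ∈ P.2 ∪ Q.2})

/-- the derived CSP(□,Ω) laws in the stable failures model:
`P ⊓ (Ω □ Q) = P ⊓ (P □ Q)` and `(Ω □ P) ⊓ (Ω □ Q) = (Ω □ P) □ (Ω □ Q)`. -/
theorem derived_omega_laws {A : Type*} (P Q : Proc A)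
    (hP : IsProc P) (hQ : IsProc Q) :
    pintc P (pextc (pomega A) Q) = pintc P (pextc P Q) ∧
    pintc (pextc (pomega A) P) (pextc (pomega A) Q)
      = pextc (pextc (pomega A) P) (pextc (pomega A) Q) := by
  have hPnil := hP.nil_mem
  constructor
  · refine Prod.ext ?_ ?_
    · ext w
      simp only [pintc, pextc, pomega, Set.mem_union, Set.mem_singleton_iff]
      constructor
      · rintro (h | h | h)
        · tauto
        · subst h; exact Or.inl hPnil
        · tauto
      · rintro (h | h | h)
        · tauto
        · exact Or.inl h
        · tauto
    · ext p
      simp only [pintc, pextc, pomega, Set.mem_union, Set.mem_setOf_eq,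
        Set.mem_inter_iff, Set.mem_empty_iff_false]
      constructor
      · rintro (h | ⟨h1, h2⟩ | ⟨h1, (h2 | h2)⟩) <;> tauto
      · rintro (h | ⟨h1, h2, h3⟩ | ⟨h1, (h2 | h2)⟩) <;> tauto
  · refine Prod.ext ?_ ?_
    · rfl
    · ext p
      simp only [pintc, pextc, pomega, Set.mem_union, Set.mem_setOf_eq,
        Set.mem_inter_iff, Set.mem_empty_iff_false]
      constructor
      · rintro (h | h) <;> tauto
      · rintro (h | h) <;> tauto

end CSP
end

section
/- Let P be a finitary process over A. Then for every w ∈ T_P there exist n ≥ 0 and sets V₁, …, Vₙ ⊆ fut_P(w) such that for every W ⊆ A one has (w,W) ∈ F_P if and only if W ∩ Vᵢ = ∅ for some i ∈ {1, …, n}. -/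
namespace CSP

variable {A : Type*}

/-- refusal accounting for finitary processes: for each trace `w`
there are `n ≥ 0` subsets `V₁, …, Vₙ` of `fut_P(w)` such that `(w,W) ∈ F_P`
iff `W` misses some `Vᵢ`. -/
theorem process_refusal_accounting {A : Type*} (P : Proc A)
    (hP : IsProc P) (hfin : ProcFinitary P) (w : List A) (hw : w ∈ P.1) :
    ∃ (n : ℕ) (V : Fin n → Set A),
      (∀ i, V i ⊆ futP P w) ∧
      (∀ W : Set A, (w, W) ∈ P.2 ↔ ∃ i, W ∩ V i = ∅) := by
  set fut := futP P w with hfut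
  have hfutfin : fut.Finite := by
    have : fut ⊆ (fun a => w ++ [a]) ⁻¹' P.1 := fun a ha => ha
    exact Set.Finite.preimage (Function.Injective.injOn (fun a b h => by
      simpa using List.append_inj_right h rfl)) hfin |>.subset this
  have hSfin : {U : Set A | U ⊆ fut ∧ (w, U) ∈ P.2}.Finite :=
    hfutfin.finite_subsets.subset fun U hU => hU.1
  obtain ⟨n, f, _, hf⟩ := hSfin.fin_param
  refine ⟨n, fun i => fut \ f i, fun i => Set.diff_subset, fun W => ?_⟩
  constructor
  · intro hW
    have hU : W ∩ fut ∈ {U : Set A | U ⊆ fut ∧ (w, U) ∈ P.2} :=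
      ⟨Set.inter_subset_right, hP.subset_closed w W _ hW Set.inter_subset_left⟩
    rw [← hf] at hU
    obtain ⟨i, hi⟩ := hU
    refine ⟨i, ?_⟩
    show W ∩ (fut \ f i) = ∅
    rw [hi]
    ext a; simp only [Set.mem_inter_iff, Set.mem_diff, Set.mem_empty_iff_false, iff_false]
    tauto
  · rintro ⟨i, hi⟩
    have hfi : f i ∈ {U : Set A | U ⊆ fut ∧ (w, U) ∈ P.2} := by
      rw [← hf]; exact ⟨i, rfl⟩
    have hsub : W ∩ fut ⊆ f i := by
      intro a ⟨haW, haf⟩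
      by_contra h
      have : a ∈ W ∩ (fut \ f i) := ⟨haW, haf, h⟩
      rw [hi] at this; exact this
    have h1 : (w, W ∩ fut) ∈ P.2 := hP.subset_closed w (f i) _ hfi.2 hsub
    have h2 : (w, (W ∩ fut) ∪ (W \ fut)) ∈ P.2 :=
      hP.ext_closed w _ _ h1 (fun a ha => ha.2)
    rwa [Set.inter_union_diff] at h2

end CSP
end

section
/- Let X be a set. The smallest collection of X-processes over A that contains Ω and η(x) for every x ∈ X, and is closed under internal choice ⊓ and the deterministic external choice operations □_{a⃗} and □^Ω_{a⃗} (for every finite sequence of pairwise distinct actions a₁,…,aₙ, n ≥ 0), is exactly the collection of all finitary X-processes. -/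
namespace CSP

variable {A X : Type*}

/-- An `X`-process candidate over `A`: its trace set contains plain traces
`(w, none)` and `X`-traces `(w, some x)`, and its failure pairs `(w, W)` have
`W ⊆ A` possibly infinite. -/
abbrev XProc (A X : Type*) := Set (List A × Option X) × Set (List A × Set A)

/-- Conditions (1)–(5), together with `X`-trace prefix closure, making a pair
`(T, F)` an `X`-process. -/
structure IsXProc (P : XProc A X) : Prop where
  nil_mem : ([], (none : Option X)) ∈ P.1
  prefix_closed : ∀ (w : List A) (a : A),
    (w ++ [a], (none : Option X)) ∈ P.1 → (w, (none : Option X)) ∈ P.1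
  xtrace_closed : ∀ (w : List A) (x : X),
    (w, some x) ∈ P.1 → (w, (none : Option X)) ∈ P.1
  fail_trace : ∀ (w : List A) (W : Set A),
    (w, W) ∈ P.2 → (w, (none : Option X)) ∈ P.1
  subset_closed : ∀ (w : List A) (W V : Set A),
    (w, W) ∈ P.2 → V ⊆ W → (w, V) ∈ P.2
  ext_closed : ∀ (w : List A) (W V : Set A), (w, W) ∈ P.2 →
    (∀ a ∈ V, (w ++ [a], (none : Option X)) ∉ P.1) → (w, W ∪ V) ∈ P.2

/-- An `X`-process is finitary when its trace set is finite. -/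
def XFinitary (P : XProc A X) : Prop := P.1.Finite

/-- The unit `η(x) = ({ε, εx}, ∅)`. -/
def xeta (A : Type*) {X : Type*} (x : X) : XProc A X :=
  ({([], none), ([], some x)}, ∅)

/-- Divergence `Ω = ({ε}, ∅)`. -/
def xomega (A X : Type*) : XProc A X := ({([], none)}, ∅)

/-- Internal choice `P ⊓ Q`. -/
def xintc (P Q : XProc A X) : XProc A X := (P.1 ∪ Q.1, P.2 ∪ Q.2)

/-- Deterministic external choice `□_{a⃗}(P₁,…,Pₙ)`, given as a list of
action/process pairs (the actions are required to be pairwise distinct via a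
`Nodup` hypothesis wherever this operation is used). -/
def xdet (cs : List (A × XProc A X)) : XProc A X :=
  ({([], none)} ∪ {t | ∃ c ∈ cs, ∃ s ∈ c.2.1, t = (c.1 :: s.1, s.2)},
   {p | p.1 = [] ∧ ∀ c ∈ cs, c.1 ∉ p.2} ∪
   {p | ∃ c ∈ cs, ∃ w, p.1 = c.1 :: w ∧ (w, p.2) ∈ c.2.2})

/-- Deterministic external choice with an `Ω`-summand `□^Ω_{a⃗}(P₁,…,Pₙ)`. -/
def xdetO (cs : List (A × XProc A X)) : XProc A X :=
  ({([], none)} ∪ {t | ∃ c ∈ cs, ∃ s ∈ c.2.1, t = (c.1 :: s.1, s.2)},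
   {p | ∃ c ∈ cs, ∃ w, p.1 = c.1 :: w ∧ (w, p.2) ∈ c.2.2})

/-- The collection of `X`-processes generated from `Ω` and the `η(x)` by
internal choice and the deterministic external choices `□_{a⃗}`, `□^Ω_{a⃗}`. -/
inductive XGen (A X : Type*) : XProc A X → Prop where
  | omega : XGen A X (xomega A X)
  | eta (x : X) : XGen A X (xeta A x)
  | intc {P Q : XProc A X} : XGen A X P → XGen A X Q → XGen A X (xintc P Q)
  | det (cs : List (A × XProc A X)) : (cs.map Prod.fst).Nodup →
      (∀ c ∈ cs, XGen A X c.2) → XGen A X (xdet cs)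
  | detO (cs : List (A × XProc A X)) : (cs.map Prod.fst).Nodup →
      (∀ c ∈ cs, XGen A X c.2) → XGen A X (xdetO cs)

section Aux

/-! ### Auxiliary lemmas -/

lemma isXProc_xomega : IsXProc (xomega A X) := by
  constructor <;> simp [xomega]

lemma isXProc_xeta (x : X) : IsXProc (xeta A x) := by
  constructor <;> simp [xeta]

lemma isXProc_xintc {P Q : XProc A X} (hP : IsXProc P) (hQ : IsXProc Q) :
    IsXProc (xintc P Q) := by
  constructor
  · exact Or.inl hP.nil_mem
  · rintro w a (h | h)
    · exact Or.inl (hP.prefix_closed w a h)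
    · exact Or.inr (hQ.prefix_closed w a h)
  · rintro w x (h | h)
    · exact Or.inl (hP.xtrace_closed w x h)
    · exact Or.inr (hQ.xtrace_closed w x h)
  · rintro w W (h | h)
    · exact Or.inl (hP.fail_trace w W h)
    · exact Or.inr (hQ.fail_trace w W h)
  · rintro w W V (h | h) hVW
    · exact Or.inl (hP.subset_closed w W V h hVW)
    · exact Or.inr (hQ.subset_closed w W V h hVW)
  · rintro w W V (h | h) hV
    · exact Or.inl (hP.ext_closed w W V h fun a ha hm => hV a ha (Or.inl hm))
    · exact Or.inr (hQ.ext_closed w W V h fun a ha hm => hV a ha (Or.inr hm))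

lemma isXProc_xdetO (cs : List (A × XProc A X))
    (h : ∀ c ∈ cs, IsXProc c.2) : IsXProc (xdetO cs) := by
  constructor
  · exact Or.inl rfl
  · rintro w a (hw | ⟨c, hc, s, hs, heq⟩)
    · simp at hw
    · match w, heq with
      | [], _ => exact Or.inl rfl
      | b :: w', heq =>
        obtain ⟨⟨h1, h2⟩, h3⟩ : (b = c.1 ∧ w' ++ [a] = s.1) ∧ (none : Option X) = s.2 := by
          simpa using heq
        subst h1
        refine Or.inr ⟨c, hc, (w', none), ?_, by simp⟩
        exact (h c hc).prefix_closed w' a (by rw [h2, h3]; exact hs)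
  · rintro w x (hw | ⟨c, hc, s, hs, heq⟩)
    · simp at hw
    · match w, heq with
      | c₁ :: w', heq =>
        obtain ⟨⟨h1, h2⟩, h3⟩ : (c₁ = c.1 ∧ w' = s.1) ∧ (some x : Option X) = s.2 := by
          simpa using heq
        subst h1
        refine Or.inr ⟨c, hc, (w', none), ?_, by simp⟩
        exact (h c hc).xtrace_closed w' x (by rw [h2, h3]; exact hs)
  · rintro w W ⟨c, hc, w', heq, hm⟩
    subst heq
    exact Or.inr ⟨c, hc, (w', none), (h c hc).fail_trace w' W hm, by simp⟩
  · rintro w W V ⟨c, hc, w', heq, hm⟩ hVW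
    exact ⟨c, hc, w', heq, (h c hc).subset_closed w' W V hm hVW⟩
  · rintro w W V ⟨c, hc, w', heq, hm⟩ hV
    subst heq
    refine ⟨c, hc, w', rfl, (h c hc).ext_closed w' W V hm ?_⟩
    intro a ha hmem
    exact hV a ha (Or.inr ⟨c, hc, (w' ++ [a], none), hmem, by simp⟩)

lemma isXProc_xdet (cs : List (A × XProc A X))
    (h : ∀ c ∈ cs, IsXProc c.2) : IsXProc (xdet cs) := by
  have hO := isXProc_xdetO cs h
  constructor
  · exact hO.nil_mem
  · exact hO.prefix_closed
  · exact hO.xtrace_closed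
  · rintro w W (⟨hw, -⟩ | hm)
    · simp only at hw; subst hw; exact Or.inl rfl
    · exact hO.fail_trace w W hm
  · rintro w W V (⟨hw, hW⟩ | hm) hVW
    · exact Or.inl ⟨hw, fun c hc hmem => hW c hc (hVW hmem)⟩
    · exact Or.inr (hO.subset_closed w W V hm hVW)
  · rintro w W V (⟨hw, hW⟩ | hm) hV
    · subst hw
      refine Or.inl ⟨rfl, fun c hc hmem => ?_⟩
      rcases hmem with hmem | hmem
      · exact hW c hc hmem
      · exact hV c.1 hmem (Or.inr ⟨c, hc, ([], none), (h c hc).nil_mem, by simp⟩)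
    · exact Or.inr (hO.ext_closed w W V hm hV)

lemma xfin_det_traces (cs : List (A × XProc A X)) (h : ∀ c ∈ cs, XFinitary c.2) :
    ({([], (none : Option X))} ∪
      {t | ∃ c ∈ cs, ∃ s ∈ c.2.1, t = (c.1 :: s.1, s.2)} :
      Set (List A × Option X)).Finite := by
  apply Set.Finite.union (Set.finite_singleton _)
  have heq : {t | ∃ c ∈ cs, ∃ s ∈ c.2.1, t = (c.1 :: s.1, s.2)} =
      ⋃ c ∈ {c | c ∈ cs},
        (fun s : List A × Option X => (c.1 :: s.1, s.2)) '' c.2.1 := by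
    ext t
    simp only [Set.mem_setOf_eq, Set.mem_iUnion, Set.mem_image]
    constructor
    · rintro ⟨c, hc, s, hs, rfl⟩; exact ⟨c, hc, s, hs, rfl⟩
    · rintro ⟨c, hc, s, hs, rfl⟩; exact ⟨c, hc, s, hs, rfl⟩
  rw [heq]
  exact Set.Finite.biUnion (cs.finite_toSet) fun c hc => ((h c hc).image _)

lemma xgen_isXProc {P : XProc A X} (h : XGen A X P) : IsXProc P ∧ XFinitary P := by
  induction h with
  | omega => exact ⟨isXProc_xomega, Set.finite_singleton _⟩
  | eta x => exact ⟨isXProc_xeta x, (Set.finite_singleton _).insert _⟩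
  | intc h1 h2 ih1 ih2 =>
    exact ⟨isXProc_xintc ih1.1 ih2.1, ih1.2.union ih2.2⟩
  | det cs hnd hgen ih =>
    exact ⟨isXProc_xdet cs fun c hc => (ih c hc).1,
      xfin_det_traces cs fun c hc => (ih c hc).2⟩
  | detO cs hnd hgen ih =>
    exact ⟨isXProc_xdetO cs fun c hc => (ih c hc).1,
      xfin_det_traces cs fun c hc => (ih c hc).2⟩

/-- The derivative `P/a` of a process after performing action `a`. -/
def xderiv (P : XProc A X) (a : A) : XProc A X :=
  ((fun s : List A × Option X => (a :: s.1, s.2)) ⁻¹' P.1,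
   (fun p : List A × Set A => (a :: p.1, p.2)) ⁻¹' P.2)

lemma xderiv_isXProc {P : XProc A X} (hP : IsXProc P) {a : A}
    (ha : ([a], (none : Option X)) ∈ P.1) : IsXProc (xderiv P a) := by
  constructor
  · exact ha
  · intro w b h; exact hP.prefix_closed (a :: w) b h
  · intro w x h; exact hP.xtrace_closed (a :: w) x h
  · intro w W h; exact hP.fail_trace (a :: w) W h
  · intro w W V h hVW; exact hP.subset_closed (a :: w) W V h hVW
  · intro w W V h hV; exact hP.ext_closed (a :: w) W V h hV

lemma xderiv_inj (a : A) :
    Function.Injective (fun s : List A × Option X => (a :: s.1, s.2)) := by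
  rintro ⟨w, o⟩ ⟨w', o'⟩ h
  simp only [Prod.mk.injEq, List.cons.injEq] at h
  exact Prod.ext h.1.2 h.2

lemma xderiv_fin {P : XProc A X} (hfin : P.1.Finite) (a : A) :
    (xderiv P a).1.Finite :=
  hfin.preimage (xderiv_inj a).injOn

lemma xderiv_ncard_lt {P : XProc A X} (hP : IsXProc P) (hfin : P.1.Finite) (a : A) :
    (xderiv P a).1.ncard < P.1.ncard := by
  have h1 : (fun s : List A × Option X => (a :: s.1, s.2)) '' (xderiv P a).1 ⊆
      P.1 \ {(([] : List A), (none : Option X))} := by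
    rintro t ⟨s, hs, rfl⟩
    exact ⟨hs, by simp⟩
  calc (xderiv P a).1.ncard
      = ((fun s : List A × Option X => (a :: s.1, s.2)) '' (xderiv P a).1).ncard :=
        (Set.ncard_image_of_injective _ (xderiv_inj a)).symm
    _ ≤ (P.1 \ {(([] : List A), (none : Option X))}).ncard :=
        Set.ncard_le_ncard h1 hfin.diff
    _ < P.1.ncard := Set.ncard_diff_singleton_lt_of_mem hP.nil_mem hfin

lemma IsXProc.mem_prefix {P : XProc A X} (h : IsXProc P) (w v : List A) (o : Option X)
    (hm : (w ++ v, o) ∈ P.1) : (w, (none : Option X)) ∈ P.1 := by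
  have hn : (w ++ v, (none : Option X)) ∈ P.1 := by
    cases o with
    | none => exact hm
    | some x => exact h.xtrace_closed _ x hm
  clear hm
  induction v using List.reverseRecOn with
  | nil => simpa using hn
  | append_singleton v' a ih =>
    exact ih (h.prefix_closed (w ++ v') a (by rwa [← List.append_assoc] at hn))

lemma mem_foldr_fst (L : List (XProc A X)) (B : XProc A X) (t : List A × Option X) :
    t ∈ (L.foldr xintc B).1 ↔ (∃ Q ∈ L, t ∈ Q.1) ∨ t ∈ B.1 := by
  induction L with
  | nil => simp
  | cons Q L ih =>
    simp only [List.foldr_cons, xintc, Set.mem_union, ih, List.mem_cons]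
    constructor
    · rintro (h | ⟨R, hR, h⟩ | h)
      · exact Or.inl ⟨Q, Or.inl rfl, h⟩
      · exact Or.inl ⟨R, Or.inr hR, h⟩
      · exact Or.inr h
    · rintro (⟨R, (rfl | hR), h⟩ | h)
      · exact Or.inl h
      · exact Or.inr (Or.inl ⟨R, hR, h⟩)
      · exact Or.inr (Or.inr h)

lemma mem_foldr_snd (L : List (XProc A X)) (B : XProc A X) (p : List A × Set A) :
    p ∈ (L.foldr xintc B).2 ↔ (∃ Q ∈ L, p ∈ Q.2) ∨ p ∈ B.2 := by
  induction L with
  | nil => simp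
  | cons Q L ih =>
    simp only [List.foldr_cons, xintc, Set.mem_union, ih, List.mem_cons]
    constructor
    · rintro (h | ⟨R, hR, h⟩ | h)
      · exact Or.inl ⟨Q, Or.inl rfl, h⟩
      · exact Or.inl ⟨R, Or.inr hR, h⟩
      · exact Or.inr h
    · rintro (⟨R, (rfl | hR), h⟩ | h)
      · exact Or.inl h
      · exact Or.inr (Or.inl ⟨R, hR, h⟩)
      · exact Or.inr (Or.inr h)

lemma xgen_foldr (L : List (XProc A X)) (B : XProc A X) (hB : XGen A X B)
    (hL : ∀ Q ∈ L, XGen A X Q) : XGen A X (L.foldr xintc B) := by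
  induction L with
  | nil => exact hB
  | cons Q L ih =>
    exact XGen.intc (hL Q List.mem_cons_self)
      (ih fun R hR => hL R (List.mem_cons_of_mem Q hR))

lemma map_fst_map_pair {α β : Type*} (l : List α) (f : α → β) :
    (l.map (fun a => (a, f a))).map Prod.fst = l := by
  induction l with
  | nil => rfl
  | cons a t iht => simp [iht]

lemma finitary_xgen_aux :
    ∀ n : ℕ, ∀ P : XProc A X, IsXProc P → P.1.Finite → P.1.ncard < n → XGen A X P := by
  intro n
  induction n with
  | zero => intro P _ _ h; omega
  | succ n ih =>
    intro P hP hfin hcard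
    classical
    -- the set of initial actions, initial X-traces and initial failures
    have hIfin : {a : A | ([a], (none : Option X)) ∈ P.1}.Finite := by
      have heq : {a : A | ([a], (none : Option X)) ∈ P.1}
          = (fun a : A => (([a] : List A), (none : Option X))) ⁻¹' P.1 := rfl
      rw [heq]
      refine hfin.preimage (Function.Injective.injOn ?_)
      intro a b hab
      simpa using hab
    have hSfin : {x : X | (([] : List A), some x) ∈ P.1}.Finite := by
      have heq : {x : X | (([] : List A), some x) ∈ P.1}
          = (fun x : X => (([] : List A), some x)) ⁻¹' P.1 := rfl
      rw [heq]
      refine hfin.preimage (Function.Injective.injOn ?_)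
      intro a b hab
      simpa using hab
    have hWfin : {U : Set A |
        U ⊆ {a : A | ([a], (none : Option X)) ∈ P.1} ∧ (([] : List A), U) ∈ P.2}.Finite :=
      hIfin.finite_subsets.subset fun U hU => hU.1
    set la : List A := hIfin.toFinset.toList with hla_def
    have hla : ∀ a, a ∈ la ↔ ([a], (none : Option X)) ∈ P.1 := by
      intro a
      simp [hla_def, Set.Finite.mem_toFinset]
    set xs : List X := hSfin.toFinset.toList with hxs_def
    have hxs : ∀ x, x ∈ xs ↔ (([] : List A), some x) ∈ P.1 := by
      intro x
      simp [hxs_def, Set.Finite.mem_toFinset]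
    set Us : List (Set A) := hWfin.toFinset.toList with hUs_def
    have hUs : ∀ U : Set A, U ∈ Us ↔
        (U ⊆ {a : A | ([a], (none : Option X)) ∈ P.1} ∧ (([] : List A), U) ∈ P.2) := by
      intro U
      simp [hUs_def, Set.Finite.mem_toFinset]
    set cs : List (A × XProc A X) := la.map (fun a => (a, xderiv P a)) with hcs_def
    have hcs : ∀ c : A × XProc A X, c ∈ cs ↔ ∃ a ∈ la, c = (a, xderiv P a) := by
      intro c
      simp only [hcs_def, List.mem_map]
      constructor
      · rintro ⟨a, ha, rfl⟩; exact ⟨a, ha, rfl⟩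
      · rintro ⟨a, ha, rfl⟩; exact ⟨a, ha, rfl⟩
    have hnd : (cs.map Prod.fst).Nodup := by
      have : cs.map Prod.fst = la := by rw [hcs_def]; exact map_fst_map_pair la _
      rw [this]
      exact Finset.nodup_toList _
    have hder_gen : ∀ a ∈ la, XGen A X (xderiv P a) := by
      intro a ha
      refine ih _ (xderiv_isXProc hP ((hla a).1 ha)) (xderiv_fin hfin a) ?_
      exact lt_of_lt_of_le (xderiv_ncard_lt hP hfin a) (Nat.lt_succ_iff.mp hcard)
    set L : List (XProc A X) :=
      xs.map (fun x => xeta A x) ++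
        Us.map (fun U => xdet (cs.filter (fun c => @decide (c.1 ∉ U) (Classical.propDecidable _)))) with hL_def
    have key : P = L.foldr xintc (xdetO cs) := by
      refine Prod.ext ?_ ?_
      · ext t
        obtain ⟨w, o⟩ := t
        rw [mem_foldr_fst]
        constructor
        · intro hm
          match w with
          | [] =>
            match o with
            | none => exact Or.inr (Or.inl rfl)
            | some x =>
              refine Or.inl ⟨xeta A x, ?_, Or.inr rfl⟩
              rw [hL_def]
              exact List.mem_append_left _ (List.mem_map.mpr ⟨x, (hxs x).2 hm, rfl⟩)
          | a :: w' =>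
            have ha : ([a], (none : Option X)) ∈ P.1 := hP.mem_prefix [a] w' o hm
            refine Or.inr (Or.inr ⟨(a, xderiv P a), (hcs _).2 ⟨a, (hla a).2 ha, rfl⟩,
              (w', o), hm, rfl⟩)
        · rintro (⟨Q, hQ, ht⟩ | ht)
          · rw [hL_def, List.mem_append] at hQ
            rcases hQ with hQ | hQ
            · obtain ⟨x, hx, rfl⟩ := List.mem_map.mp hQ
              rcases ht with ht | ht
              · obtain ⟨h1, h2⟩ : w = [] ∧ o = none := by simpa using ht
                subst h1; subst h2
                exact hP.nil_mem
              · obtain ⟨h1, h2⟩ : w = [] ∧ o = some x := by simpa using ht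
                subst h1; subst h2
                exact (hxs x).1 hx
            · obtain ⟨U, hU, rfl⟩ := List.mem_map.mp hQ
              rcases ht with ht | ⟨c, hc, s, hs, heq⟩
              · obtain ⟨h1, h2⟩ : w = [] ∧ o = none := by simpa using ht
                subst h1; subst h2
                exact hP.nil_mem
              · obtain ⟨a, ha, rfl⟩ := (hcs c).1 (List.mem_of_mem_filter hc)
                obtain ⟨h1, h2⟩ := Prod.mk.injEq .. ▸ heq
                rw [h1, h2]
                exact hs
          · rcases ht with ht | ⟨c, hc, s, hs, heq⟩
            · obtain ⟨h1, h2⟩ : w = [] ∧ o = none := by simpa using ht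
              subst h1; subst h2
              exact hP.nil_mem
            · obtain ⟨a, ha, rfl⟩ := (hcs c).1 hc
              obtain ⟨h1, h2⟩ := Prod.mk.injEq .. ▸ heq
              rw [h1, h2]
              exact hs
      · ext p
        obtain ⟨w, W⟩ := p
        rw [mem_foldr_snd]
        constructor
        · intro hm
          match w with
          | a :: w' =>
            have haT : (a :: w', (none : Option X)) ∈ P.1 := hP.fail_trace _ _ hm
            have ha : ([a], (none : Option X)) ∈ P.1 := hP.mem_prefix [a] w' none haT
            exact Or.inr ⟨(a, xderiv P a), (hcs _).2 ⟨a, (hla a).2 ha, rfl⟩, w', rfl, hm⟩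
          | [] =>
            set U : Set A := W ∩ {a : A | ([a], (none : Option X)) ∈ P.1} with hU_def
            have hUmem : U ∈ Us := by
              rw [hUs]
              exact ⟨Set.inter_subset_right,
                hP.subset_closed [] W U hm Set.inter_subset_left⟩
            refine Or.inl ⟨xdet (cs.filter (fun c => @decide (c.1 ∉ U) (Classical.propDecidable _))), ?_, ?_⟩
            · rw [hL_def]
              exact List.mem_append_right _ (List.mem_map.mpr ⟨U, hUmem, rfl⟩)
            · refine Or.inl ⟨rfl, ?_⟩
              intro c hc hcW
              have hcU : c.1 ∉ U := by
                have := List.of_mem_filter hc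
                simpa using this
              obtain ⟨a, ha, rfl⟩ := (hcs c).1 (List.mem_of_mem_filter hc)
              exact hcU ⟨hcW, (hla a).1 ha⟩
        · rintro (⟨Q, hQ, hp⟩ | ⟨c, hc, w', heq, hm⟩)
          · rw [hL_def, List.mem_append] at hQ
            rcases hQ with hQ | hQ
            · obtain ⟨x, hx, rfl⟩ := List.mem_map.mp hQ
              simp [xeta] at hp
            · obtain ⟨U, hU, rfl⟩ := List.mem_map.mp hQ
              obtain ⟨hUsub, hUF⟩ := (hUs U).1 hU
              rcases hp with ⟨hw, hWc⟩ | ⟨c, hc, w', heq, hm⟩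
              · simp only at hw
                subst hw
                have h1 : (([] : List A), W ∩ U) ∈ P.2 :=
                  hP.subset_closed [] U (W ∩ U) hUF Set.inter_subset_right
                have h2 : (([] : List A), (W ∩ U) ∪ (W \ U)) ∈ P.2 := by
                  refine hP.ext_closed [] (W ∩ U) (W \ U) h1 ?_
                  rintro a ⟨haW, haU⟩ hmem
                  have haI : a ∈ la := (hla a).2 hmem
                  have hcmem : (a, xderiv P a) ∈ cs.filter (fun c => @decide (c.1 ∉ U) (Classical.propDecidable _)) := by
                    refine List.mem_filter.mpr ⟨(hcs _).2 ⟨a, haI, rfl⟩, ?_⟩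
                    simpa using haU
                  exact hWc (a, xderiv P a) hcmem haW
                rwa [Set.inter_union_diff] at h2
              · obtain ⟨a, ha, rfl⟩ := (hcs c).1 (List.mem_of_mem_filter hc)
                have heq' : w = a :: w' := heq
                subst heq'
                exact hm
          · obtain ⟨a, ha, rfl⟩ := (hcs c).1 hc
            have heq' : w = a :: w' := heq
            subst heq'
            exact hm
    rw [key]
    refine xgen_foldr L (xdetO cs) ?_ ?_
    · refine XGen.detO cs hnd ?_
      intro c hc
      obtain ⟨a, ha, rfl⟩ := (hcs c).1 hc
      exact hder_gen a ha
    · intro Q hQ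
      rw [hL_def, List.mem_append] at hQ
      rcases hQ with hQ | hQ
      · obtain ⟨x, hx, rfl⟩ := List.mem_map.mp hQ
        exact XGen.eta x
      · obtain ⟨U, hU, rfl⟩ := List.mem_map.mp hQ
        refine XGen.det _ ?_ ?_
        · exact List.Nodup.sublist ((List.filter_sublist (l := cs)).map Prod.fst) hnd
        · intro c hc
          obtain ⟨a, ha, rfl⟩ := (hcs c).1 (List.mem_of_mem_filter hc)
          exact hder_gen a ha

end Aux

/-- the smallest collection of `X`-processes containing `Ω` and
each `η(x)` and closed under `⊓`, `□_{a⃗}` and `□^Ω_{a⃗}` is exactly the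
collection of finitary `X`-processes. -/
theorem generated_iff_finitary_Xprocess {A X : Type*} (P : XProc A X) :
    XGen A X P ↔ (IsXProc P ∧ XFinitary P) := by
  constructor
  · exact xgen_isXProc
  · rintro ⟨h1, h2⟩
    exact finitary_xgen_aux (P.1.ncard + 1) P h1 h2 (Nat.lt_succ_self _)

end CSP
end
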